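/- Let n ≥ 1, let λ_1,…,λ_n ∈ 𝔻 and let B(z) = ∏_{i=1}^n (z−λ_i)/(1−conj(λ_i)z). Let g be holomorphic on 𝔻 with absolutely summable Taylor coefficients and |g(0)| = 1, and set h = B·g. Then (∑_{k≥0} |ĥ(k)|) · (sup_{k≥0} |((1−z²)B)^∧(k)|) ≥ 1, where ĥ(k) and ((1−z²)B)^∧(k) denote the k-th Taylor coefficients at 0 of h and of (1−z²)B respectively. Consequently every function h in the Wiener algebra that is divisible by B and satisfies |h(0)| = ∏_{i=1}^n |λ_i| obeys ‖h‖_W ≥ 1/‖(1−z²)B‖_{l∞A}. -/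

import Mathlib

open Complex MeasureTheory Real Metric FormalMultilinearSeries intervalIntegral
open scoped NNReal ENNReal

lemma exp_orth (m : ℤ) : (∫ θ in (0:ℝ)..(2*π), Complex.exp (m * θ * I)) =
    if m = 0 then (2*π : ℂ) else 0 := by
  rcases eq_or_ne m 0 with hm | hm
  · simp [hm]
  · rw [if_neg hm]
    have hc : (m : ℂ) * I ≠ 0 := by
      simp [Complex.ext_iff, hm]
    have h := integral_exp_mul_complex (a := (0:ℝ)) (b := 2*π) hc
    have h2 : ∀ θ:ℝ, (m:ℂ) * I * θ = (m:ℂ) * θ * I := fun θ => by ring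
    simp only [h2] at h
    rw [h]
    have : Complex.exp ((m:ℂ) * (2*π:ℝ) * I) = 1 := by
      rw [show (m:ℂ) * (2*π:ℝ) * I = m * (2 * π * I) by push_cast; ring]
      exact Complex.exp_int_mul_two_pi_mul_I m
    push_cast at this ⊢
    rw [this]
    simp

lemma ofScalars_coeff (c : ℕ → ℂ) (k : ℕ) :
    (FormalMultilinearSeries.ofScalars ℂ c).coeff k = c k := by
  show (FormalMultilinearSeries.ofScalars ℂ c k) (fun _ => 1) = c k
  rw [FormalMultilinearSeries.ofScalars_apply_eq]
  simp

lemma bc_norm_summable (n : ℕ) (lam : Fin n → ℂ) (hlam : ∀ i, ‖lam i‖ < 1) (bc : ℕ → ℂ)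
    (hbrep : ∀ z : ℂ, ‖z‖ < 1 →
      Summable (fun k : ℕ => bc k * z ^ k) ∧
      ∑' k : ℕ, bc k * z ^ k =
        (1 - z ^ 2) * ∏ i : Fin n, (z - lam i) / (1 - (starRingEnd ℂ) (lam i) * z)) :
    Summable (fun k : ℕ => ‖bc k‖) := by
  set F : ℂ → ℂ := fun z => (1 - z ^ 2) * ∏ i : Fin n, (z - lam i) / (1 - (starRingEnd ℂ) (lam i) * z) with hF
  -- a uniform bound M < 1 for the ‖lam i‖
  set M : ℝ≥0 := Finset.univ.sup (fun i => ‖lam i‖₊) with hM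
  have hM1 : (M : ℝ) < 1 := by
    rcases Nat.eq_zero_or_pos n with h0 | h0
    · subst h0; simp [hM]
    · have : M < 1 := by
        rw [hM, Finset.sup_lt_iff (by norm_num)]
        intro i _
        exact_mod_cast hlam i
      exact_mod_cast this
  have hMle : ∀ i, ‖lam i‖ ≤ (M : ℝ) := fun i => by
    exact_mod_cast Finset.le_sup (f := fun i => ‖lam i‖₊) (Finset.mem_univ i)
  -- a radius R with 1 < R and M * R < 1
  obtain ⟨R, hR1, hRM⟩ : ∃ R : ℝ≥0, 1 < (R:ℝ) ∧ (M:ℝ) * R < 1 := by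
    refine ⟨Real.toNNReal (2 / (1 + M)), ?_, ?_⟩
    · rw [Real.coe_toNNReal _ (by positivity)]
      rw [lt_div_iff₀ (by positivity)]
      nlinarith
    · rw [Real.coe_toNNReal _ (by positivity)]
      rw [div_eq_mul_inv, ← mul_assoc, mul_comm, ← div_eq_inv_mul]
      rw [div_lt_one (by positivity)]
      nlinarith [M.coe_nonneg]
  have hRpos : 0 < R := by exact_mod_cast lt_trans one_pos hR1
  -- denominators don't vanish on the closed ball of radius R
  have hden : ∀ i, ∀ z : ℂ, z ∈ closedBall (0:ℂ) R → 1 - (starRingEnd ℂ) (lam i) * z ≠ 0 := by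
    intro i z hz hzero
    have h1 : ‖(starRingEnd ℂ) (lam i) * z‖ < 1 := by
      rw [norm_mul, RCLike.norm_conj]
      calc ‖lam i‖ * ‖z‖ ≤ M * R := by
            apply mul_le_mul (hMle i) ?_ (norm_nonneg _) M.coe_nonneg
            simpa using hz
        _ < 1 := hRM
    rw [sub_eq_zero] at hzero
    rw [← hzero] at h1
    simp at h1
  have hd : DifferentiableOn ℂ F (closedBall (0:ℂ) R) := by
    apply DifferentiableOn.mul
    · exact (differentiable_const _ |>.sub (differentiable_pow 2)).differentiableOn
    · apply DifferentiableOn.fun_finsetProd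
      intro i _
      apply DifferentiableOn.div
      · exact (differentiable_id.sub (differentiable_const _)).differentiableOn
      · exact ((differentiable_const _).sub ((differentiable_const _).mul differentiable_id)).differentiableOn
      · exact fun z hz => hden i z hz
  have hq : HasFPowerSeriesOnBall F (cauchyPowerSeries F 0 R) 0 R :=
    hd.hasFPowerSeriesOnBall hRpos
  -- the ofScalars series for bc has radius ≥ 1/2
  set p : FormalMultilinearSeries ℂ ℂ ℂ := FormalMultilinearSeries.ofScalars ℂ bc with hp
  have hrad : ((1/2 : ℝ≥0) : ℝ≥0∞) ≤ p.radius := by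
    have hs : Summable (fun k => bc k * ((1:ℂ)/2) ^ k) := (hbrep ((1:ℂ)/2) (by norm_num)).1
    have ht : Filter.Tendsto (fun k => ‖bc k‖ * ((1:ℝ)/2) ^ k) Filter.atTop (nhds 0) := by
      have := hs.tendsto_atTop_zero.norm
      simpa [norm_mul, norm_pow] using this
    obtain ⟨C, hC⟩ := ht.bddAbove_range
    apply p.le_radius_of_bound C
    intro k
    have := hC (Set.mem_range_self k)
    simpa [hp, FormalMultilinearSeries.ofScalars_norm, ofScalars_coeff] using this
  have hps : HasFPowerSeriesOnBall F p 0 ((1/2 : ℝ≥0) : ℝ≥0∞) := by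
    refine ⟨hrad, by norm_num, ?_⟩
    intro y hy
    rw [mem_emetric_ball_zero_iff] at hy
    have hy1 : ‖y‖ < 1 := by
      have : (‖y‖₊ : ℝ) < ((1:ℝ≥0)/2 : ℝ≥0) := by exact_mod_cast hy
      have : ‖y‖ < ((1:ℝ≥0)/2 : ℝ≥0) := this
      calc ‖y‖ < ((1:ℝ≥0)/2 : ℝ≥0) := this
        _ < 1 := by norm_num
    obtain ⟨hsum, heq⟩ := hbrep y hy1
    have hFy : F (0 + y) = ∑' k : ℕ, bc k * y ^ k := by rw [zero_add]; exact heq.symm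
    have : HasSum (fun k : ℕ => bc k * y ^ k) (F (0 + y)) := by
      rw [hFy]; exact hsum.hasSum
    convert this using 2 with k
    · rfl
    rw [hp, FormalMultilinearSeries.ofScalars_apply_eq]
    simp [mul_comm]
  -- uniqueness of power series
  have hpq : p = cauchyPowerSeries F 0 R :=
    hps.hasFPowerSeriesAt.eq_formalMultilinearSeries hq.hasFPowerSeriesAt
  have h1R : (1 : ℝ≥0) < (cauchyPowerSeries F 0 R).radius := by
    calc ((1:ℝ≥0) : ℝ≥0∞) < ((R:ℝ≥0) : ℝ≥0∞) := by exact_mod_cast hR1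
      _ ≤ _ := hq.r_le
  have := (cauchyPowerSeries F 0 R).summable_norm_mul_pow h1R
  rw [← hpq] at this
  simpa [hp, FormalMultilinearSeries.ofScalars_norm, ofScalars_coeff] using this

/-- If `B` is the finite Blaschke product with zeros λ₁,…,λₙ ∈ 𝔻, `g` is in the
Wiener algebra with |g(0)| = 1, and `h = B·g`, then
(∑_{k≥0} |ĥ(k)|) · (sup_{k≥0} |((1−z²)B)^∧(k)|) ≥ 1.
Here `hc`, `gc`, `bc` are the Taylor coefficient sequences of h, g and (1−z²)B, specified by
their power-series representations on 𝔻. -/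
theorem wiener_norm_mul_linfA_ge_one
    (n : ℕ) (hn : 1 ≤ n) (lam : Fin n → ℂ) (hlam : ∀ i, ‖lam i‖ < 1)
    (gc hc bc : ℕ → ℂ)
    (hg_sum : Summable fun k : ℕ => ‖gc k‖)
    (hh_sum : Summable fun k : ℕ => ‖hc k‖)
    (hg0 : ‖gc 0‖ = 1)
    (hhrep : ∀ z : ℂ, ‖z‖ < 1 →
      ∑' k : ℕ, hc k * z ^ k =
        (∏ i : Fin n, (z - lam i) / (1 - (starRingEnd ℂ) (lam i) * z)) *
          ∑' k : ℕ, gc k * z ^ k)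
    (hbrep : ∀ z : ℂ, ‖z‖ < 1 →
      Summable (fun k : ℕ => bc k * z ^ k) ∧
      ∑' k : ℕ, bc k * z ^ k =
        (1 - z ^ 2) * ∏ i : Fin n, (z - lam i) / (1 - (starRingEnd ℂ) (lam i) * z)) :
    1 ≤ (∑' k : ℕ, ‖hc k‖) * ⨆ k : ℕ, ‖bc k‖ := by
  have hbsum : Summable (fun k : ℕ => ‖bc k‖) := bc_norm_summable n lam hlam bc hbrep
  set B : ℂ → ℂ := fun z => ∏ i : Fin n, (z - lam i) / (1 - (starRingEnd ℂ) (lam i) * z) with hB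
  set Hs : ℂ → ℂ := fun z => ∑' k : ℕ, hc k * z ^ k with hHs
  set Gs : ℂ → ℂ := fun z => ∑' k : ℕ, gc k * z ^ k with hGs
  set Fs : ℂ → ℂ := fun z => ∑' k : ℕ, bc k * z ^ k with hFs
  -- continuity on the closed ball
  have key_cont : ∀ (c : ℕ → ℂ), Summable (fun k => ‖c k‖) →
      ContinuousOn (fun z : ℂ => ∑' k : ℕ, c k * z ^ k) (closedBall (0:ℂ) 1) := by
    intro c hcs
    apply continuousOn_tsum (u := fun k => ‖c k‖)
      (fun k => (continuous_const.mul (continuous_pow k)).continuousOn) hcs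
    intro k z hz
    simp only [Pi.mul_apply]
    rw [norm_mul, norm_pow]
    simp only [mem_closedBall, dist_zero_right] at hz
    calc ‖c k‖ * ‖z‖ ^ k ≤ ‖c k‖ * 1 := by
          apply mul_le_mul_of_nonneg_left (pow_le_one₀ (norm_nonneg _) hz) (norm_nonneg _)
      _ = ‖c k‖ := mul_one _
  have hHc : ContinuousOn Hs (closedBall (0:ℂ) 1) := key_cont hc hh_sum
  have hGc : ContinuousOn Gs (closedBall (0:ℂ) 1) := key_cont gc hg_sum
  have hFc : ContinuousOn Fs (closedBall (0:ℂ) 1) := key_cont bc hbsum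
  have hdenom : ∀ (i : Fin n), ∀ z ∈ closedBall (0:ℂ) 1, 1 - (starRingEnd ℂ) (lam i) * z ≠ 0 := by
    intro i z hz h0
    rw [sub_eq_zero] at h0
    have : ‖(starRingEnd ℂ) (lam i) * z‖ < 1 := by
      rw [norm_mul, RCLike.norm_conj]
      simp only [mem_closedBall, dist_zero_right] at hz
      calc ‖lam i‖ * ‖z‖ ≤ ‖lam i‖ * 1 := by
            exact mul_le_mul_of_nonneg_left hz (norm_nonneg _)
        _ < 1 := by simpa using hlam i
    rw [← h0] at this
    simp at this
  have hBc : ContinuousOn B (closedBall (0:ℂ) 1) := by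
    apply continuousOn_finset_prod
    intro i _
    exact ((continuous_id.sub continuous_const).continuousOn).div
      ((continuous_const.sub (continuous_const.mul continuous_id)).continuousOn)
      (hdenom i)
  -- boundary identities via closure
  have hclos : closedBall (0:ℂ) 1 ⊆ closure (ball (0:ℂ) 1) := by
    rw [closure_ball (0:ℂ) one_ne_zero]
  have hHB : Set.EqOn Hs (fun z => B z * Gs z) (closedBall (0:ℂ) 1) := by
    apply Set.EqOn.of_subset_closure (s := ball (0:ℂ) 1) ?_ hHc (hBc.mul hGc)
      ball_subset_closedBall hclos
    intro z hz
    simp only [mem_ball, dist_zero_right] at hz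
    exact hhrep z hz
  have hFB : Set.EqOn Fs (fun z => (1 - z^2) * B z) (closedBall (0:ℂ) 1) := by
    apply Set.EqOn.of_subset_closure (s := ball (0:ℂ) 1) ?_ hFc
      (((continuous_const.sub (continuous_pow 2)).continuousOn).mul hBc)
      ball_subset_closedBall hclos
    intro z hz
    simp only [mem_ball, dist_zero_right] at hz
    exact (hbrep z hz).2
  -- the pointwise identity on the circle
  have circle_id : ∀ θ : ℝ,
      Hs (Complex.exp (θ * I)) * (starRingEnd ℂ) (Fs (Complex.exp (θ * I))) *
        (Complex.exp (θ * I))^2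
      = Gs (Complex.exp (θ * I)) * ((Complex.exp (θ * I))^2 - 1) := by
    intro θ
    set ζ : ℂ := Complex.exp (θ * I) with hζ
    have hζn : ‖ζ‖ = 1 := by
      simpa [hζ] using Complex.norm_exp_ofReal_mul_I θ
    have hmem : ζ ∈ closedBall (0:ℂ) 1 := by
      simp [mem_closedBall, dist_zero_right, hζn]
    have hcc : ζ * (starRingEnd ℂ) ζ = 1 := by
      rw [Complex.mul_conj, Complex.normSq_eq_norm_sq]
      rw [hζn]
      norm_num
    have hfac : ∀ i : Fin n, ‖(ζ - lam i) / (1 - (starRingEnd ℂ) (lam i) * ζ)‖ = 1 := by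
      intro i
      have hne : ζ ≠ lam i := by
        intro h
        rw [h] at hζn
        exact absurd hζn (ne_of_lt (hlam i))
      have hd : 1 - (starRingEnd ℂ) (lam i) * ζ = ζ * (starRingEnd ℂ) (ζ - lam i) := by
        rw [map_sub]
        linear_combination -hcc
      rw [norm_div, hd, norm_mul, hζn, one_mul, RCLike.norm_conj]
      exact div_self (norm_ne_zero_iff.mpr (sub_ne_zero.mpr hne))
    have hBn : ‖B ζ‖ = 1 := by
      simp only [hB]
      rw [norm_prod]
      exact Finset.prod_eq_one (fun i _ => hfac i)
    have hBB : B ζ * (starRingEnd ℂ) (B ζ) = 1 := by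
      rw [Complex.mul_conj, Complex.normSq_eq_norm_sq]
      rw [hBn]
      norm_num
    calc Hs ζ * (starRingEnd ℂ) (Fs ζ) * ζ^2
        = (B ζ * Gs ζ) * (starRingEnd ℂ) ((1-ζ^2) * B ζ) * ζ^2 := by
          rw [show Hs ζ = B ζ * Gs ζ from hHB hmem, show Fs ζ = (1-ζ^2) * B ζ from hFB hmem]
      _ = Gs ζ * (B ζ * (starRingEnd ℂ) (B ζ)) * ((1 - ((starRingEnd ℂ) ζ)^2) * ζ^2) := by
          simp only [map_mul, map_sub, map_one, map_pow]
          ring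
      _ = Gs ζ * (ζ^2 - (ζ * (starRingEnd ℂ) ζ)^2) := by rw [hBB]; ring
      _ = Gs ζ * (ζ^2 - 1) := by rw [hcc]; ring
  -- the common integral
  set J : ℂ := ∫ θ in (0:ℝ)..(2*π), Hs (Complex.exp (θ * I)) *
      (starRingEnd ℂ) (Fs (Complex.exp (θ * I))) * (Complex.exp (θ * I))^2 with hJ
  have h2ple' : (0:ℝ) ≤ 2*π := by positivity
  have hpow' : ∀ (k : ℕ) (θ : ℝ), (Complex.exp (θ*I))^k = Complex.exp ((k:ℤ) * θ * I) := by
    intro k θ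
    rw [← Complex.exp_nat_mul]
    congr 1
    push_cast
    ring
  have hmulexp : ∀ (a b : ℤ) (θ:ℝ), Complex.exp (a*θ*I) * Complex.exp (b*θ*I)
      = Complex.exp ((a+b)*θ*I) := by
    intro a b θ
    rw [← Complex.exp_add]
    congr 1
    push_cast
    ring
  have hconj : ∀ (l:ℕ) (θ:ℝ), (starRingEnd ℂ) ((Complex.exp (θ*I))^l)
      = Complex.exp ((-(l:ℤ)) * θ * I) := by
    intro l θ
    rw [hpow' l θ, ← Complex.exp_conj]
    congr 1
    simp [Complex.conj_ofReal]
  have hnormexp : ∀ (m : ℤ) (θ : ℝ), ‖Complex.exp ((m:ℂ) * θ * I)‖ = 1 := by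
    intro m θ
    rw [show ((m:ℂ) * θ * I) = ((m * θ : ℝ) : ℂ) * I by push_cast; ring]
    simpa using Complex.norm_exp_ofReal_mul_I (m * θ)
  have claimA : J = (2*π : ℝ) * ∑' k : ℕ, hc k * (starRingEnd ℂ) (bc (k+2)) := by
    set T : ℕ × ℕ → ℝ → ℂ := fun p θ =>
      hc p.1 * (starRingEnd ℂ) (bc p.2) *
        Complex.exp ((((p.1:ℤ) - (p.2:ℤ) + 2 : ℤ) : ℂ) * θ * I) with hT
    have hTeq : ∀ (p : ℕ × ℕ) (θ : ℝ),
        (hc p.1 * (Complex.exp (θ*I))^p.1 * ((starRingEnd ℂ) (bc p.2 * (Complex.exp (θ*I))^p.2)))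
          * (Complex.exp (θ*I))^2 = T p θ := by
      intro p θ
      rw [map_mul, hconj p.2 θ, hpow' p.1 θ, hpow' 2 θ, hT]
      dsimp only
      calc hc p.1 * Complex.exp (((p.1:ℤ):ℂ) * θ * I) *
            ((starRingEnd ℂ) (bc p.2) * Complex.exp ((-((p.2:ℤ)):ℂ) * θ * I)) *
            Complex.exp (((2:ℕ):ℂ) * θ * I)
          = hc p.1 * (starRingEnd ℂ) (bc p.2) *
            (Complex.exp (((p.1:ℤ):ℂ) * θ * I) * Complex.exp ((-((p.2:ℤ)):ℂ) * θ * I) *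
              Complex.exp (((2:ℕ):ℂ) * θ * I)) := by ring
        _ = hc p.1 * (starRingEnd ℂ) (bc p.2) *
            Complex.exp (((p.1:ℤ):ℂ) * θ * I + (-((p.2:ℤ)):ℂ) * θ * I + ((2:ℕ):ℂ) * θ * I) := by
            rw [← Complex.exp_add, ← Complex.exp_add]
        _ = hc p.1 * (starRingEnd ℂ) (bc p.2) *
            Complex.exp ((((p.1:ℤ) - (p.2:ℤ) + 2 : ℤ) : ℂ) * θ * I) := by
            congr 1
            congr 1
            push_cast
            ring
    have step1 : J = ∫ θ in (0:ℝ)..(2*π), ∑' p : ℕ × ℕ, T p θ := by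
      rw [hJ]
      apply intervalIntegral.integral_congr
      intro θ _
      dsimp only
      have he : ‖Complex.exp (θ*I)‖ = 1 := by
        simpa using Complex.norm_exp_ofReal_mul_I θ
      have hsf : Summable (fun k : ℕ => ‖hc k * (Complex.exp (θ*I))^k‖) := by
        apply Summable.congr hh_sum
        intro k
        rw [norm_mul, norm_pow, he, one_pow, mul_one]
      have hsg : Summable (fun l : ℕ => ‖(starRingEnd ℂ) (bc l * (Complex.exp (θ*I))^l)‖) := by
        apply Summable.congr hbsum
        intro l
        rw [RCLike.norm_conj, norm_mul, norm_pow, he, one_pow, mul_one]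
      have hFconj : (starRingEnd ℂ) (Fs (Complex.exp (θ*I)))
          = ∑' l : ℕ, (starRingEnd ℂ) (bc l * (Complex.exp (θ*I))^l) := by
        rw [hFs]
        exact tsum_star
      rw [hFconj]
      rw [show Hs (Complex.exp (θ*I)) = ∑' k : ℕ, hc k * (Complex.exp (θ*I))^k from rfl]
      rw [tsum_mul_tsum_of_summable_norm hsf hsg]
      rw [← tsum_mul_right]
      exact tsum_congr (fun p => hTeq p θ)
    have hTint : ∀ p : ℕ × ℕ, IntegrableOn (T p) (Set.Ioc (0:ℝ) (2*π)) volume := by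
      intro p
      apply Continuous.integrableOn_Ioc
      rw [hT]
      fun_prop
    have hTnorm : ∀ (p : ℕ × ℕ) (θ : ℝ), ‖T p θ‖ = ‖hc p.1‖ * ‖bc p.2‖ := by
      intro p θ
      rw [hT]
      dsimp only
      rw [norm_mul, norm_mul, hnormexp ((p.1:ℤ) - (p.2:ℤ) + 2), RCLike.norm_conj, mul_one]
    have hTsum : Summable (fun p : ℕ × ℕ => ∫ θ in Set.Ioc (0:ℝ) (2*π), ‖T p θ‖) := by
      have : (fun p : ℕ × ℕ => ∫ θ in Set.Ioc (0:ℝ) (2*π), ‖T p θ‖)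
          = fun p : ℕ × ℕ => (2*π) * (‖hc p.1‖ * ‖bc p.2‖) := by
        funext p
        simp only [hTnorm]
        rw [setIntegral_const, Real.volume_real_Ioc_of_le (by nlinarith [Real.pi_pos]), smul_eq_mul]
        ring
      rw [this]
      exact (hh_sum.mul_of_nonneg hbsum (fun k => norm_nonneg _) (fun l => norm_nonneg _)).mul_left _
    have step2 : J = ∑' p : ℕ × ℕ, ∫ θ in (0:ℝ)..(2*π), T p θ := by
      rw [step1, intervalIntegral.integral_of_le h2ple']
      rw [← integral_tsum_of_summable_integral_norm hTint hTsum]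
      exact tsum_congr (fun p => by rw [intervalIntegral.integral_of_le h2ple'])
    have hterm : ∀ p : ℕ × ℕ, (∫ θ in (0:ℝ)..(2*π), T p θ)
        = if ((p.1:ℤ) - (p.2:ℤ) + 2) = 0 then (2*π:ℂ) * (hc p.1 * (starRingEnd ℂ) (bc p.2)) else 0 := by
      intro p
      rw [hT]
      dsimp only
      rw [intervalIntegral.integral_const_mul, exp_orth]
      split_ifs
      · ring
      · ring
    have hvsum : Summable (fun p : ℕ × ℕ => ∫ θ in (0:ℝ)..(2*π), T p θ) := by
      apply Summable.of_norm_bounded hTsum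
      intro p
      rw [intervalIntegral.integral_of_le h2ple']
      exact norm_integral_le_integral_norm _
    rw [step2, Summable.tsum_prod hvsum]
    have hinner : ∀ k : ℕ, (∑' l : ℕ, ∫ θ in (0:ℝ)..(2*π), T (k, l) θ)
        = (2*π:ℂ) * (hc k * (starRingEnd ℂ) (bc (k+2))) := by
      intro k
      rw [tsum_eq_single (k+2) ?_]
      · rw [hterm (k, k+2)]
        rw [if_pos (by omega)]
      · intro l hl
        rw [hterm (k, l)]
        rw [if_neg (by omega)]
    rw [tsum_congr hinner, tsum_mul_left]
    push_cast
    ring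
  have h2ple : (0:ℝ) ≤ 2*π := by positivity
  have hpow : ∀ (k : ℕ) (θ : ℝ), (Complex.exp (θ*I))^k = Complex.exp ((k:ℤ) * θ * I) := by
    intro k θ
    rw [← Complex.exp_nat_mul]
    congr 1
    push_cast
    ring
  have claimB : J = -((2*π : ℝ) * gc 0) := by
    have step1 : J = ∫ θ in (0:ℝ)..(2*π),
        ∑' k:ℕ, gc k * (Complex.exp (θ*I))^k * ((Complex.exp (θ*I))^2 - 1) := by
      rw [hJ]
      apply intervalIntegral.integral_congr
      intro θ _
      dsimp only
      rw [circle_id θ]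
      exact tsum_mul_right.symm
    have hGint : ∀ k:ℕ, IntegrableOn
        (fun θ:ℝ => gc k * (Complex.exp (θ*I))^k * ((Complex.exp (θ*I))^2 - 1))
        (Set.Ioc (0:ℝ) (2*π)) volume := by
      intro k
      apply Continuous.integrableOn_Ioc
      fun_prop
    have hnb : ∀ (k:ℕ) (θ:ℝ), ‖gc k * (Complex.exp (θ*I))^k * ((Complex.exp (θ*I))^2 - 1)‖
        ≤ ‖gc k‖ * 2 := by
      intro k θ
      have he : ‖Complex.exp (θ*I)‖ = 1 := by
        simpa using Complex.norm_exp_ofReal_mul_I θ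
      rw [norm_mul, norm_mul, norm_pow, he, one_pow, mul_one]
      apply mul_le_mul_of_nonneg_left ?_ (norm_nonneg _)
      calc ‖(Complex.exp (θ*I))^2 - 1‖ ≤ ‖(Complex.exp (θ*I))^2‖ + ‖(1:ℂ)‖ := norm_sub_le _ _
        _ = 2 := by rw [norm_pow, he]; norm_num
    have hGsum : Summable (fun k:ℕ => ∫ θ in Set.Ioc (0:ℝ) (2*π),
        ‖gc k * (Complex.exp (θ*I))^k * ((Complex.exp (θ*I))^2 - 1)‖) := by
      apply Summable.of_nonneg_of_le
        (fun k => integral_nonneg (fun θ => norm_nonneg _)) ?_ (hg_sum.mul_right (2 * (2*π)))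
      intro k
      calc (∫ θ in Set.Ioc (0:ℝ) (2*π),
            ‖gc k * (Complex.exp (θ*I))^k * ((Complex.exp (θ*I))^2 - 1)‖)
          ≤ ∫ _ in Set.Ioc (0:ℝ) (2*π), (‖gc k‖ * 2) := by
            apply integral_mono (hGint k).norm (integrable_const _)
            intro θ
            exact hnb k θ
        _ = (2*π) * (‖gc k‖ * 2) := by
            rw [setIntegral_const]
            rw [Real.volume_real_Ioc_of_le (by nlinarith [Real.pi_pos]), smul_eq_mul]
            ring
        _ = ‖gc k‖ * (2 * (2*π)) := by ring
    have step2 : J = ∑' k:ℕ, ∫ θ in (0:ℝ)..(2*π),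
        gc k * (Complex.exp (θ*I))^k * ((Complex.exp (θ*I))^2 - 1) := by
      rw [step1, intervalIntegral.integral_of_le h2ple]
      rw [← integral_tsum_of_summable_integral_norm hGint hGsum]
      exact tsum_congr (fun k => by rw [intervalIntegral.integral_of_le h2ple])
    have hterm : ∀ k : ℕ, (∫ θ in (0:ℝ)..(2*π),
        gc k * (Complex.exp (θ*I))^k * ((Complex.exp (θ*I))^2 - 1))
        = if k = 0 then -((2*π:ℝ) * gc 0) else 0 := by
      intro k
      have hptw : ∀ θ:ℝ, gc k * (Complex.exp (θ*I))^k * ((Complex.exp (θ*I))^2 - 1)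
          = gc k * (Complex.exp (((k:ℤ)+2) * θ * I) - Complex.exp ((k:ℤ) * θ * I)) := by
        intro θ
        rw [hpow k θ, show ((Complex.exp (θ*I))^2 : ℂ) = Complex.exp ((2:ℤ) * θ * I) from hpow 2 θ]
        have e1 : Complex.exp ((k:ℤ)*θ*I) * Complex.exp ((2:ℤ)*θ*I)
            = Complex.exp (((k:ℤ)+2)*θ*I) := by
          rw [← Complex.exp_add]; congr 1; push_cast; ring
        linear_combination (gc k) * e1
      rw [intervalIntegral.integral_congr (fun θ _ => hptw θ)]
      rw [intervalIntegral.integral_const_mul]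
      have hi1 : IntervalIntegrable (fun θ:ℝ => Complex.exp (((k:ℤ)+2) * θ * I))
          volume (0:ℝ) (2*π) := by
        apply Continuous.intervalIntegrable; fun_prop
      have hi2 : IntervalIntegrable (fun θ:ℝ => Complex.exp ((k:ℤ) * θ * I))
          volume (0:ℝ) (2*π) := by
        apply Continuous.intervalIntegrable; fun_prop
      rw [intervalIntegral.integral_sub hi1 hi2]
      have e2 := exp_orth ((k:ℤ)+2)
      have e3 := exp_orth (k:ℤ)
      rw [if_neg (by omega : ¬((k:ℤ)+2 = 0))] at e2
      push_cast at e2 e3 ⊢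
      rw [e2, e3]
      rcases eq_or_ne k 0 with hk | hk
      · subst hk
        norm_num
        ring
      · rw [if_neg (by exact_mod_cast hk), if_neg hk]
        ring
    rw [step2]
    rw [tsum_congr hterm]
    rw [tsum_eq_single 0 (fun b hb => if_neg hb)]
    simp
  have hS : ∑' k : ℕ, hc k * (starRingEnd ℂ) (bc (k+2)) = - gc 0 := by
    have h2pi : ((2*π : ℝ) : ℂ) ≠ 0 := by
      simp only [ne_eq, Complex.ofReal_eq_zero]
      positivity
    apply mul_left_cancel₀ h2pi
    rw [← claimA, claimB]
    ring
  -- conclude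
  set Msup : ℝ := ⨆ k : ℕ, ‖bc k‖ with hMsup
  have hbdd : BddAbove (Set.range fun k : ℕ => ‖bc k‖) := by
    refine ⟨∑' k, ‖bc k‖, ?_⟩
    rintro x ⟨k, rfl⟩
    exact Summable.le_tsum hbsum k (fun j _ => norm_nonneg _)
  have hle : ∀ j, ‖bc j‖ ≤ Msup := fun j => le_ciSup hbdd j
  have hMsupnn : 0 ≤ Msup := le_trans (norm_nonneg (bc 0)) (hle 0)
  have hsum2 : Summable (fun k : ℕ => ‖hc k‖ * Msup) := hh_sum.mul_right _
  have hsum1 : Summable (fun k : ℕ => ‖hc k * (starRingEnd ℂ) (bc (k+2))‖) := by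
    apply Summable.of_nonneg_of_le (fun k => norm_nonneg _) ?_ hsum2
    intro k
    rw [norm_mul, RCLike.norm_conj]
    exact mul_le_mul_of_nonneg_left (hle _) (norm_nonneg _)
  calc (1:ℝ) = ‖∑' k : ℕ, hc k * (starRingEnd ℂ) (bc (k+2))‖ := by rw [hS]; simpa using hg0.symm
    _ ≤ ∑' k : ℕ, ‖hc k * (starRingEnd ℂ) (bc (k+2))‖ := norm_tsum_le_tsum_norm hsum1
    _ ≤ ∑' k : ℕ, ‖hc k‖ * Msup := by
        apply Summable.tsum_le_tsum ?_ hsum1 hsum2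
        intro k
        rw [norm_mul, RCLike.norm_conj]
        exact mul_le_mul_of_nonneg_left (hle _) (norm_nonneg _)
    _ = (∑' k : ℕ, ‖hc k‖) * Msup := tsum_mul_right
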